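/- arXiv:2602.15239 — 3 statements merged into one kernel-verified Lean document; each statement's English description precedes it below -/
import Mathlib

section
/- Let μ be a Borel probability measure on X, let x_1, …, x_N ∈ X, and let V_1, …, V_N be pairwise disjoint Borel sets whose union is X, with V_j contained in the closed ball of radius r > 0 centered at x_j for every j. Let M ∈ ℝ satisfy ⟨Q f(u), K f(v)⟩ ≤ M for all u, v ∈ X. Then for every point x_i, |∫_X exp(⟨Q f(x_i), K f(y)⟩) dμ(y) − Σ_{j=1}^N exp(⟨Q f(x_i), K f(x_j)⟩)·μ(V_j)| ≤ exp(M)·B_f·C_Q·C_K·r. -/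
open MeasureTheory
open scoped RealInnerProductSpace BigOperators

lemma exp_abs_sub_le_aux {a b M : ℝ} (ha : a ≤ M) (hb : b ≤ M) :
    |Real.exp a - Real.exp b| ≤ Real.exp M * |a - b| := by
  wlog h : b ≤ a generalizing a b
  · rw [abs_sub_comm, abs_sub_comm a b]; exact this hb ha (le_of_not_ge h)
  rw [abs_of_nonneg (sub_nonneg.2 (Real.exp_le_exp.2 h)), abs_of_nonneg (sub_nonneg.2 h)]
  have h1 : Real.exp a * Real.exp (b - a) = Real.exp b := by
    rw [← Real.exp_add]; ring_nf
  have h2 := Real.add_one_le_exp (b - a)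
  have h3 : Real.exp a ≤ Real.exp M := Real.exp_le_exp.2 ha
  nlinarith [Real.exp_pos a, Real.exp_pos M]

/-- For a Borel probability measure `μ` and a partition `P 1, …, P N` of `X`
into Borel sets with `P j ⊆ closedBall (x j) r`, and `M` an upper bound on all attention
inner products, the integral of the attention kernel is approximated by the weighted sum:
`|∫ exp⟨Q f(xi), K f(y)⟩ dμ(y) − Σ_j exp⟨Q f(xi), K f(xj)⟩ μ(P j)| ≤ exp(M)·B_f·C_Q·C_K·r`. -/
theorem attention_kernel_integral_riemann_bound
    {D : ℕ} {X : Type*} [MetricSpace X] [MeasurableSpace X] [BorelSpace X]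
    (μ : Measure X) [IsProbabilityMeasure μ]
    (Q K : EuclideanSpace ℝ (Fin D) →ₗ[ℝ] EuclideanSpace ℝ (Fin D))
    (C_Q C_K B_f r : ℝ) (hCQ : 0 < C_Q) (hCK : 0 < C_K) (hBf : 0 < B_f) (hr : 0 < r)
    (hQ : ∀ u, ‖Q u‖ ≤ C_Q * ‖u‖) (hK : ∀ u, ‖K u‖ ≤ C_K * ‖u‖)
    (f : X → EuclideanSpace ℝ (Fin D))
    (hfLip : ∀ a b, ‖f a - f b‖ ≤ dist a b)
    (hfB : ∀ x, ‖f x‖ ≤ B_f)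
    (N : ℕ) (x : Fin N → X) (P : Fin N → Set X)
    (hPmeas : ∀ j, MeasurableSet (P j))
    (hPdisj : Pairwise fun j k => Disjoint (P j) (P k))
    (hPcover : (⋃ j, P j) = Set.univ)
    (hPball : ∀ j, P j ⊆ Metric.closedBall (x j) r)
    (M : ℝ) (hM : ∀ u v : X, ⟪Q (f u), K (f v)⟫ ≤ M)
    (i : Fin N) :
    abs ((∫ y, Real.exp ⟪Q (f (x i)), K (f y)⟫ ∂μ) -
         ∑ j, Real.exp ⟪Q (f (x i)), K (f (x j))⟫ * (μ (P j)).toReal)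
      ≤ Real.exp M * B_f * C_Q * C_K * r := by
  have hfc : Continuous f := by
    refine (LipschitzWith.of_dist_le_mul (K := 1) fun a b => ?_).continuous
    rw [dist_eq_norm]
    simpa using hfLip a b
  set g : X → ℝ := fun y => Real.exp ⟪Q (f (x i)), K (f y)⟫ with hg
  have hgcont : Continuous g := by
    exact Real.continuous_exp.comp
      (Continuous.inner continuous_const (K.continuous_of_finiteDimensional.comp hfc))
  have hgbound : ∀ y, ‖g y‖ ≤ Real.exp M := fun y => by
    rw [Real.norm_eq_abs, abs_of_pos (Real.exp_pos _)]
    exact Real.exp_le_exp.2 (hM (x i) y)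
  have hint : Integrable g μ := by
    refine (integrable_const (Real.exp M)).mono' hgcont.aestronglyMeasurable ?_
    filter_upwards with y using hgbound y
  -- bound on the inner-product difference
  set ε : ℝ := Real.exp M * (B_f * C_Q * C_K * r) with hε
  have key : ∀ j, ∀ y ∈ P j, ‖g y - Real.exp ⟪Q (f (x i)), K (f (x j))⟫‖ ≤ ε := by
    intro j y hy
    have hd : ‖f y - f (x j)‖ ≤ r := le_trans (hfLip y (x j)) (hPball j hy)
    have hdiff : |⟪Q (f (x i)), K (f y)⟫ - ⟪Q (f (x i)), K (f (x j))⟫| ≤ B_f * C_Q * C_K * r := by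
      rw [← inner_sub_right, ← map_sub]
      calc |⟪Q (f (x i)), K (f y - f (x j))⟫|
          ≤ ‖Q (f (x i))‖ * ‖K (f y - f (x j))‖ := abs_real_inner_le_norm _ _
        _ ≤ (C_Q * B_f) * (C_K * r) := by
            apply mul_le_mul (le_trans (hQ _) (by
              exact mul_le_mul_of_nonneg_left (hfB _) hCQ.le))
              (le_trans (hK _) (mul_le_mul_of_nonneg_left hd hCK.le))
              (norm_nonneg _) (by positivity)
        _ = B_f * C_Q * C_K * r := by ring
    rw [Real.norm_eq_abs]
    calc |g y - Real.exp ⟪Q (f (x i)), K (f (x j))⟫|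
        ≤ Real.exp M * |⟪Q (f (x i)), K (f y)⟫ - ⟪Q (f (x i)), K (f (x j))⟫| :=
          exp_abs_sub_le_aux (hM (x i) y) (hM (x i) (x j))
      _ ≤ Real.exp M * (B_f * C_Q * C_K * r) :=
          mul_le_mul_of_nonneg_left hdiff (Real.exp_pos M).le
  have hmf : ∀ j, μ (P j) < ⊤ := fun j => lt_of_le_of_lt (measure_mono (Set.subset_univ _))
    (by simp [measure_univ])
  -- decompose the integral
  have h1 : (∫ y, g y ∂μ) = ∑ j, ∫ y in P j, g y ∂μ := by
    rw [← setIntegral_univ, ← hPcover,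
      integral_iUnion hPmeas hPdisj (hint.integrableOn), tsum_fintype]
  have h2 : ∀ j, Real.exp ⟪Q (f (x i)), K (f (x j))⟫ * (μ (P j)).toReal
      = ∫ _ in P j, Real.exp ⟪Q (f (x i)), K (f (x j))⟫ ∂μ := fun j => by
    rw [setIntegral_const, smul_eq_mul, mul_comm]; rfl
  have h3 : ∑ j, (μ (P j)).toReal = 1 := by
    have := measure_iUnion hPdisj hPmeas (μ := μ)
    rw [hPcover, measure_univ, tsum_fintype] at this
    have := congrArg ENNReal.toReal this
    rw [ENNReal.toReal_sum (fun j _ => (hmf j).ne)] at this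
    simpa using this.symm
  have hterm : ∀ j, |(∫ y in P j, g y ∂μ) - Real.exp ⟪Q (f (x i)), K (f (x j))⟫ * (μ (P j)).toReal|
      ≤ ε * (μ (P j)).toReal := by
    intro j
    rw [h2 j, ← integral_sub (hint.integrableOn) (integrableOn_const (hmf j).ne)]
    rw [← Real.norm_eq_abs]
    exact norm_setIntegral_le_of_norm_le_const (hmf j) (fun y hy => key j y hy)
  calc |(∫ y, g y ∂μ) - ∑ j, Real.exp ⟪Q (f (x i)), K (f (x j))⟫ * (μ (P j)).toReal|
      = |∑ j, ((∫ y in P j, g y ∂μ) - Real.exp ⟪Q (f (x i)), K (f (x j))⟫ * (μ (P j)).toReal)| := by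
        rw [h1, Finset.sum_sub_distrib]
    _ ≤ ∑ j, |(∫ y in P j, g y ∂μ) - Real.exp ⟪Q (f (x i)), K (f (x j))⟫ * (μ (P j)).toReal| :=
        Finset.abs_sum_le_sum_abs _ _
    _ ≤ ∑ j, ε * (μ (P j)).toReal := Finset.sum_le_sum fun j _ => hterm j
    _ = ε := by rw [← Finset.mul_sum, h3, mul_one]
    _ = Real.exp M * B_f * C_Q * C_K * r := by rw [hε]; ring
end

section
/- (Deterministic form of the paper's Corollary 3.3, transferability of graph transformers across graph sizes.) Let μ be a Borel probability measure on X. For k = 1, 2, let x^{(k)}_1, …, x^{(k)}_{N_k} ∈ X and let V^{(k)}_1, …, V^{(k)}_{N_k} be pairwise disjoint Borel sets whose union is X, with V^{(k)}_j contained in the closed ball of radius r_k > 0 centered at x^{(k)}_j and μ(V^{(k)}_j) = 1/N_k for every j. Assume ‖f(x)‖ ≤ 1 for all x ∈ X; for each k let X^{(k)}_1, …, X^{(k)}_{N_k} ∈ ℝ^D satisfy ‖X^{(k)}_j − f(x^{(k)}_j)‖ ≤ Δ_k and ‖X^{(k)}_j‖ ≤ 1 for all j; and let M ≥ 0 satisfy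 |⟨Q X^{(k)}_i, K X^{(k)}_j⟩| ≤ M for all k, i, j and |⟨Q f(u), K f(v)⟩| ≤ M for all u, v ∈ X. Let Φ_{G_k}(i) denote the graph-transformer attention output on sample k, and (I_{N_k} Φ_{G_k})(x) = Φ_{G_k}(j) for x ∈ V^{(k)}_j its piecewise-constant interpolation. Set Δ_{Φ_k} = (C_V + 4·exp(2M)·C_Q·C_K·C_V)·Δ_k + (exp(M)·C_V + 2·exp(2M)·C_Q·C_K·C_V)·r_k. Then ∫_X ‖(I_{N_1} Φ_{G_1})(x) − (I_{N_2} Φ_{G_2})(x)‖ dμ(x) ≤ Δ_{Φ_1} + Δ_{Φ_2} + 2·exp(2M)·C_Q·C_K·C_V·(r_1 + r_2). -/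
set_option maxHeartbeats 1000000
open MeasureTheory
open scoped RealInnerProductSpace BigOperators



private lemma exp_abs_sub_le {M a b : ℝ} (ha : |a| ≤ M) (hb : |b| ≤ M) :
    |Real.exp a - Real.exp b| ≤ Real.exp M * |a - b| := by
  have key : ∀ u v : ℝ, |v| ≤ M → u ≤ v →
      Real.exp v - Real.exp u ≤ Real.exp M * (v - u) := by
    intro u v hv huv
    have h1 : u - v + 1 ≤ Real.exp (u - v) := Real.add_one_le_exp _
    have h2 : Real.exp (u - v) * Real.exp v = Real.exp u := by
      rw [← Real.exp_add]; ring_nf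
    have h3 : Real.exp v ≤ Real.exp M := Real.exp_le_exp.2 ((abs_le.1 hv).2)
    nlinarith [Real.exp_pos v, Real.exp_pos u]
  rcases le_total a b with h | h
  · rw [abs_sub_comm, abs_of_nonneg (sub_nonneg.2 (Real.exp_le_exp.2 h)),
      abs_sub_comm, abs_of_nonneg (sub_nonneg.2 h)]
    exact key a b hb h
  · rw [abs_of_nonneg (sub_nonneg.2 (Real.exp_le_exp.2 h)),
      abs_of_nonneg (sub_nonneg.2 h)]
    exact key b a ha h

private lemma partition_integral {X : Type*} [MeasurableSpace X]
    {E : Type*} [NormedAddCommGroup E] [NormedSpace ℝ E]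
    (μ : MeasureTheory.Measure X) {N : ℕ} {P : Fin N → Set X}
    (hPmeas : ∀ j, MeasurableSet (P j))
    (hPdisj : Pairwise fun j k => Disjoint (P j) (P k))
    (hPcover : (⋃ j, P j) = Set.univ)
    {G : X → E} (hG : Integrable G μ) :
    ∫ y, G y ∂μ = ∑ l, ∫ y in P l, G y ∂μ := by
  rw [← setIntegral_univ, ← hPcover,
    integral_iUnion hPmeas hPdisj hG.integrableOn, tsum_fintype]

private lemma att_pointwise
    {D : ℕ} {X : Type*} [MetricSpace X] [MeasurableSpace X] [BorelSpace X]
    (μ : Measure X) [IsProbabilityMeasure μ]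
    (Q K V : EuclideanSpace ℝ (Fin D) →ₗ[ℝ] EuclideanSpace ℝ (Fin D))
    (C_Q C_K C_V Δ r : ℝ)
    (hCQ : 0 < C_Q) (hCK : 0 < C_K) (hCV : 0 < C_V)
    (hΔ : 0 ≤ Δ) (hr : 0 < r)
    (hQ : ∀ u, ‖Q u‖ ≤ C_Q * ‖u‖) (hK : ∀ u, ‖K u‖ ≤ C_K * ‖u‖)
    (hV : ∀ u, ‖V u‖ ≤ C_V * ‖u‖)
    (f : X → EuclideanSpace ℝ (Fin D))
    (hfLip : ∀ a b, ‖f a - f b‖ ≤ dist a b)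
    (hf1 : ∀ a : X, ‖f a‖ ≤ 1)
    (N : ℕ) (x : Fin N → X) (P : Fin N → Set X)
    (hPmeas : ∀ j, MeasurableSet (P j))
    (hPdisj : Pairwise fun j k => Disjoint (P j) (P k))
    (hPcover : (⋃ j, P j) = Set.univ)
    (hPball : ∀ j, P j ⊆ Metric.closedBall (x j) r)
    (hPmass : ∀ j, μ (P j) = (N : ENNReal)⁻¹)
    (Xv : Fin N → EuclideanSpace ℝ (Fin D))
    (hXv : ∀ j, ‖Xv j - f (x j)‖ ≤ Δ) (hXv1 : ∀ j, ‖Xv j‖ ≤ 1)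
    (M : ℝ) (hM0 : 0 ≤ M)
    (hMd : ∀ i j, abs ⟪Q (Xv i), K (Xv j)⟫ ≤ M)
    (hMf : ∀ u v : X, abs ⟪Q (f u), K (f v)⟫ ≤ M)
    (x₀ : X) (j : Fin N) (hx₀ : x₀ ∈ P j) :
    ‖(∑ k, Real.exp ⟪Q (Xv j), K (Xv k)⟫)⁻¹ •
        (∑ k, Real.exp ⟪Q (Xv j), K (Xv k)⟫ • V (Xv k))
      - (∫ y, Real.exp ⟪Q (f x₀), K (f y)⟫ ∂μ)⁻¹ •
        (∫ y, Real.exp ⟪Q (f x₀), K (f y)⟫ • V (f y) ∂μ)‖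
      ≤ (C_V + 4 * Real.exp (2 * M) * C_Q * C_K * C_V) * (Δ + r) := by
  classical
  set s : Fin N → ℝ := fun l => ⟪Q (Xv j), K (Xv l)⟫ with hs_def
  set t : X → ℝ := fun y => ⟪Q (f x₀), K (f y)⟫ with ht_def
  show ‖(∑ k, Real.exp (s k))⁻¹ • (∑ k, Real.exp (s k) • V (Xv k))
      - (∫ y, Real.exp (t y) ∂μ)⁻¹ • (∫ y, Real.exp (t y) • V (f y) ∂μ)‖
      ≤ (C_V + 4 * Real.exp (2 * M) * C_Q * C_K * C_V) * (Δ + r)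
  have hNpos : 0 < N := j.pos
  set n : ℝ := (N : ℝ) with hn_def
  have hn : 0 < n := Nat.cast_pos.2 hNpos
  -- continuity and measurability
  have hf_cont : Continuous f := by
    have : LipschitzWith 1 f := LipschitzWith.of_dist_le_mul (fun a b => by
      rw [dist_eq_norm]; simpa using hfLip a b)
    exact this.continuous
  have hK_cont : Continuous K := K.continuous_of_finiteDimensional
  have hV_cont : Continuous V := V.continuous_of_finiteDimensional
  have ht_cont : Continuous t := continuous_const.inner (hK_cont.comp hf_cont)
  have htM : ∀ y, |t y| ≤ M := fun y => hMf x₀ y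
  have hVf_bd : ∀ y : X, ‖V (f y)‖ ≤ C_V := fun y => by
    have := hV (f y); nlinarith [hf1 y, norm_nonneg (f y)]
  have hInt_expt : Integrable (fun y => Real.exp (t y)) μ := by
    refine (integrable_const (Real.exp M)).mono'
      (Real.continuous_exp.comp ht_cont).aestronglyMeasurable (ae_of_all _ fun y => ?_)
    rw [Real.norm_eq_abs, abs_of_pos (Real.exp_pos _)]
    exact Real.exp_le_exp.2 ((abs_le.1 (htM y)).2)
  have hInt_vec : Integrable (fun y => Real.exp (t y) • V (f y)) μ := by
    refine (integrable_const (Real.exp M * C_V)).mono'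
      ((Real.continuous_exp.comp ht_cont).smul (hV_cont.comp hf_cont)).aestronglyMeasurable
      (ae_of_all _ fun y => ?_)
    rw [norm_smul, Real.norm_eq_abs, abs_of_pos (Real.exp_pos _)]
    have h1 : Real.exp (t y) ≤ Real.exp M := Real.exp_le_exp.2 ((abs_le.1 (htM y)).2)
    nlinarith [hVf_bd y, norm_nonneg (V (f y)), Real.exp_pos (t y)]
  set W := ∫ y, Real.exp (t y) ∂μ with hW_def
  set T := ∫ y, Real.exp (t y) • V (f y) ∂μ with hT_def
  have hW_lb : Real.exp (-M) ≤ W := by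
    have h := integral_mono (μ := μ) (integrable_const (Real.exp (-M))) hInt_expt
      (fun y => Real.exp_le_exp.2 ((abs_le.1 (htM y)).1))
    simpa [integral_const, measure_univ] using h
  have hW_pos : 0 < W := lt_of_lt_of_le (Real.exp_pos _) hW_lb
  set S := ∑ l, Real.exp (s l) with hS_def
  have hS_lb : n * Real.exp (-M) ≤ S := by
    have h : ∀ l ∈ Finset.univ, Real.exp (-M) ≤ Real.exp (s l) :=
      fun l _ => Real.exp_le_exp.2 ((abs_le.1 (hMd j l)).1)
    calc n * Real.exp (-M) = ∑ _l : Fin N, Real.exp (-M) := by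
          rw [Finset.sum_const, Finset.card_univ, Fintype.card_fin, nsmul_eq_mul]
      _ ≤ S := Finset.sum_le_sum h
  have hS_pos : 0 < S := lt_of_lt_of_le (by positivity) hS_lb
  set Sb := S / n with hSb_def
  have hSb_lb : Real.exp (-M) ≤ Sb := (le_div_iff₀ hn).2 (by linarith)
  have hSb_pos : 0 < Sb := lt_of_lt_of_le (Real.exp_pos _) hSb_lb
  have hSb_inv : Sb⁻¹ ≤ Real.exp M := by
    rw [show Real.exp M = (Real.exp (-M))⁻¹ by rw [Real.exp_neg, inv_inv]]
    exact inv_anti₀ (Real.exp_pos _) hSb_lb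
  have hexp2 : Real.exp (2 * M) = Real.exp M * Real.exp M := by
    rw [← Real.exp_add]; ring_nf
  set ε := 2 * C_Q * C_K * (Δ + r) with hε_def
  have hε0 : 0 ≤ ε := by positivity
  clear_value n S Sb W T ε
  -- distance from Xv l to f y for y ∈ P l
  have hXf : ∀ l : Fin N, ∀ y ∈ P l, ‖Xv l - f y‖ ≤ Δ + r := by
    intro l y hy
    have h1 : ‖f (x l) - f y‖ ≤ r := by
      have := hfLip (x l) y
      have hd : dist y (x l) ≤ r := Metric.mem_closedBall.1 (hPball l hy)
      rw [dist_comm] at hd; linarith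
    calc ‖Xv l - f y‖ = ‖(Xv l - f (x l)) + (f (x l) - f y)‖ := by
          rw [sub_add_sub_cancel]
      _ ≤ ‖Xv l - f (x l)‖ + ‖f (x l) - f y‖ := norm_add_le _ _
      _ ≤ Δ + r := add_le_add (hXv l) h1
  -- inner product estimate
  have hst : ∀ l : Fin N, ∀ y ∈ P l, |s l - t y| ≤ ε := by
    intro l y hy
    have expand : s l - t y
        = ⟪Q (Xv j), K (Xv l) - K (f y)⟫ + ⟪Q (Xv j) - Q (f x₀), K (f y)⟫ := by
      simp only [hs_def, ht_def, inner_sub_right, inner_sub_left]; ring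
    have b1 : |⟪Q (Xv j), K (Xv l) - K (f y)⟫| ≤ C_Q * C_K * (Δ + r) := by
      calc |⟪Q (Xv j), K (Xv l) - K (f y)⟫| ≤ ‖Q (Xv j)‖ * ‖K (Xv l) - K (f y)‖ :=
            abs_real_inner_le_norm _ _
        _ ≤ C_Q * C_K * (Δ + r) := by
            rw [← map_sub]
            have h1 : ‖Q (Xv j)‖ ≤ C_Q := by
              have := hQ (Xv j); nlinarith [hXv1 j, norm_nonneg (Xv j)]
            have h2 : ‖K (Xv l - f y)‖ ≤ C_K * (Δ + r) := by
              have := hK (Xv l - f y)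
              nlinarith [hXf l y hy, norm_nonneg (Xv l - f y)]
            nlinarith [norm_nonneg (Q (Xv j)), norm_nonneg (K (Xv l - f y))]
    have b2 : |⟪Q (Xv j) - Q (f x₀), K (f y)⟫| ≤ C_Q * C_K * (Δ + r) := by
      calc |⟪Q (Xv j) - Q (f x₀), K (f y)⟫| ≤ ‖Q (Xv j) - Q (f x₀)‖ * ‖K (f y)‖ :=
            abs_real_inner_le_norm _ _
        _ ≤ C_Q * C_K * (Δ + r) := by
            rw [← map_sub]
            have h1 : ‖Q (Xv j - f x₀)‖ ≤ C_Q * (Δ + r) := by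
              have := hQ (Xv j - f x₀)
              nlinarith [hXf j x₀ hx₀, norm_nonneg (Xv j - f x₀)]
            have h2 : ‖K (f y)‖ ≤ C_K := by
              have := hK (f y); nlinarith [hf1 y, norm_nonneg (f y)]
            nlinarith [norm_nonneg (Q (Xv j - f x₀)), norm_nonneg (K (f y))]
    calc |s l - t y| ≤ |⟪Q (Xv j), K (Xv l) - K (f y)⟫| + |⟪Q (Xv j) - Q (f x₀), K (f y)⟫| := by
          rw [expand]; exact abs_add_le _ _
      _ ≤ ε := by rw [hε_def]; linarith
  have hexp_st : ∀ l : Fin N, ∀ y ∈ P l,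
      |Real.exp (s l) - Real.exp (t y)| ≤ Real.exp M * ε := by
    intro l y hy
    have h := exp_abs_sub_le (hMd j l) (htM y)
    have h2 := hst l y hy
    nlinarith [Real.exp_pos M]
  have hμP : ∀ l : Fin N, (μ (P l)).toReal = n⁻¹ := by
    intro l
    rw [hPmass l, hn_def]
    simp
  have hW_sum : W = ∑ l, ∫ y in P l, Real.exp (t y) ∂μ := by
    rw [hW_def]; exact partition_integral μ hPmeas hPdisj hPcover hInt_expt
  have hT_sum : T = ∑ l, ∫ y in P l, Real.exp (t y) • V (f y) ∂μ := by
    rw [hT_def]; exact partition_integral μ hPmeas hPdisj hPcover hInt_vec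
  have hF_int : Integrable (fun y => (W⁻¹ * Real.exp (t y)) • V (f y)) μ := by
    exact (hInt_vec.smul W⁻¹).congr (ae_of_all _ fun y => by simp [mul_smul])
  have hTW : W⁻¹ • T = ∑ l, ∫ y in P l, (W⁻¹ * Real.exp (t y)) • V (f y) ∂μ := by
    rw [hT_sum, Finset.smul_sum]
    refine Finset.sum_congr rfl fun l _ => ?_
    rw [← integral_smul]
    simp_rw [smul_smul]
  have hg_sum : S⁻¹ • (∑ k, Real.exp (s k) • V (Xv k))
      = ∑ l, ∫ _y in P l, ((Real.exp (s l) / Sb) • V (Xv l)) ∂μ := by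
    rw [Finset.smul_sum]
    refine Finset.sum_congr rfl fun l _ => ?_
    rw [setIntegral_const, measureReal_def, hμP l, smul_smul, smul_smul]
    congr 1
    rw [hSb_def]
    field_simp [hn.ne', hS_pos.ne']
  have hIntOn_diff : ∀ l : Fin N, IntegrableOn
      (fun y => (Real.exp (s l) / Sb) • V (Xv l) - (W⁻¹ * Real.exp (t y)) • V (f y)) (P l) μ :=
    fun l => ((integrable_const _).integrableOn).sub hF_int.integrableOn
  have hdiff_eq : S⁻¹ • (∑ k, Real.exp (s k) • V (Xv k)) - W⁻¹ • T
      = ∑ l, ∫ y in P l,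
          ((Real.exp (s l) / Sb) • V (Xv l) - (W⁻¹ * Real.exp (t y)) • V (f y)) ∂μ := by
    rw [hg_sum, hTW, ← Finset.sum_sub_distrib]
    refine Finset.sum_congr rfl fun l _ => ?_
    rw [integral_sub ((integrable_const _).integrableOn) hF_int.integrableOn]
  have key : ∀ l : Fin N,
      ‖∫ y in P l, ((Real.exp (s l) / Sb) • V (Xv l) - (W⁻¹ * Real.exp (t y)) • V (f y)) ∂μ‖
      ≤ (Real.exp (s l) / Sb * (C_V * (Δ + r)) + Sb⁻¹ * (Real.exp M * ε) * C_V) * n⁻¹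
        + (C_V * |Sb⁻¹ - W⁻¹|) * ∫ y in P l, Real.exp (t y) ∂μ := by
    intro l
    have hint1 : IntegrableOn (fun y =>
        ‖(Real.exp (s l) / Sb) • V (Xv l) - (W⁻¹ * Real.exp (t y)) • V (f y)‖) (P l) μ :=
      (hIntOn_diff l).norm
    have hint2 : IntegrableOn (fun y =>
        (Real.exp (s l) / Sb * (C_V * (Δ + r)) + Sb⁻¹ * (Real.exp M * ε) * C_V)
          + (C_V * |Sb⁻¹ - W⁻¹|) * Real.exp (t y)) (P l) μ :=
      ((integrable_const _).integrableOn).add ((hInt_expt.const_mul _).integrableOn)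
    have hpt : ∀ y ∈ P l,
        ‖(Real.exp (s l) / Sb) • V (Xv l) - (W⁻¹ * Real.exp (t y)) • V (f y)‖
        ≤ (Real.exp (s l) / Sb * (C_V * (Δ + r)) + Sb⁻¹ * (Real.exp M * ε) * C_V)
          + (C_V * |Sb⁻¹ - W⁻¹|) * Real.exp (t y) := by
      intro y hy
      have e1 : (Real.exp (s l) / Sb) • V (Xv l) - (W⁻¹ * Real.exp (t y)) • V (f y)
          = (Real.exp (s l) / Sb) • (V (Xv l) - V (f y))
            + (Real.exp (s l) / Sb - W⁻¹ * Real.exp (t y)) • V (f y) := by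
        rw [smul_sub, sub_smul]; abel
      rw [e1]
      have n1 : ‖(Real.exp (s l) / Sb) • (V (Xv l) - V (f y))‖
          ≤ Real.exp (s l) / Sb * (C_V * (Δ + r)) := by
        rw [norm_smul, Real.norm_eq_abs, abs_of_pos (div_pos (Real.exp_pos _) hSb_pos)]
        have hVd : ‖V (Xv l) - V (f y)‖ ≤ C_V * (Δ + r) := by
          rw [← map_sub]
          have := hV (Xv l - f y)
          nlinarith [hXf l y hy, norm_nonneg (Xv l - f y)]
        have hpos : (0:ℝ) < Real.exp (s l) / Sb := div_pos (Real.exp_pos _) hSb_pos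
        nlinarith [norm_nonneg (V (Xv l) - V (f y))]
      have n2 : |Real.exp (s l) / Sb - W⁻¹ * Real.exp (t y)|
          ≤ Sb⁻¹ * (Real.exp M * ε) + |Sb⁻¹ - W⁻¹| * Real.exp (t y) := by
        have decomp : Real.exp (s l) / Sb - W⁻¹ * Real.exp (t y)
            = Sb⁻¹ * (Real.exp (s l) - Real.exp (t y)) + (Sb⁻¹ - W⁻¹) * Real.exp (t y) := by
          rw [div_eq_mul_inv]; ring
        rw [decomp]
        calc |Sb⁻¹ * (Real.exp (s l) - Real.exp (t y)) + (Sb⁻¹ - W⁻¹) * Real.exp (t y)|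
            ≤ |Sb⁻¹ * (Real.exp (s l) - Real.exp (t y))| + |(Sb⁻¹ - W⁻¹) * Real.exp (t y)| :=
              abs_add_le _ _
          _ ≤ Sb⁻¹ * (Real.exp M * ε) + |Sb⁻¹ - W⁻¹| * Real.exp (t y) := by
              rw [abs_mul, abs_mul, abs_of_pos (inv_pos.2 hSb_pos),
                abs_of_pos (Real.exp_pos _)]
              have h := hexp_st l y hy
              have h2 : Sb⁻¹ * |Real.exp (s l) - Real.exp (t y)| ≤ Sb⁻¹ * (Real.exp M * ε) :=
                mul_le_mul_of_nonneg_left h (le_of_lt (inv_pos.2 hSb_pos))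
              linarith
      have n3 : ‖(Real.exp (s l) / Sb - W⁻¹ * Real.exp (t y)) • V (f y)‖
          ≤ (Sb⁻¹ * (Real.exp M * ε) + |Sb⁻¹ - W⁻¹| * Real.exp (t y)) * C_V := by
        rw [norm_smul, Real.norm_eq_abs]
        exact mul_le_mul n2 (hVf_bd y) (norm_nonneg _) (le_trans (abs_nonneg _) n2)
      calc ‖(Real.exp (s l) / Sb) • (V (Xv l) - V (f y))
            + (Real.exp (s l) / Sb - W⁻¹ * Real.exp (t y)) • V (f y)‖
          ≤ ‖(Real.exp (s l) / Sb) • (V (Xv l) - V (f y))‖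
            + ‖(Real.exp (s l) / Sb - W⁻¹ * Real.exp (t y)) • V (f y)‖ := norm_add_le _ _
        _ ≤ (Real.exp (s l) / Sb * (C_V * (Δ + r)) + Sb⁻¹ * (Real.exp M * ε) * C_V)
            + (C_V * |Sb⁻¹ - W⁻¹|) * Real.exp (t y) := by nlinarith [Real.exp_pos (t y)]
    calc ‖∫ y in P l, ((Real.exp (s l) / Sb) • V (Xv l) - (W⁻¹ * Real.exp (t y)) • V (f y)) ∂μ‖
        ≤ ∫ y in P l, ‖(Real.exp (s l) / Sb) • V (Xv l) - (W⁻¹ * Real.exp (t y)) • V (f y)‖ ∂μ :=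
          norm_integral_le_integral_norm _
      _ ≤ ∫ y in P l, ((Real.exp (s l) / Sb * (C_V * (Δ + r)) + Sb⁻¹ * (Real.exp M * ε) * C_V)
            + (C_V * |Sb⁻¹ - W⁻¹|) * Real.exp (t y)) ∂μ :=
          setIntegral_mono_on hint1 hint2 (hPmeas l) hpt
      _ = (Real.exp (s l) / Sb * (C_V * (Δ + r)) + Sb⁻¹ * (Real.exp M * ε) * C_V) * n⁻¹
            + (C_V * |Sb⁻¹ - W⁻¹|) * ∫ y in P l, Real.exp (t y) ∂μ := by
          rw [integral_add ((integrable_const _).integrableOn)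
            ((hInt_expt.const_mul _).integrableOn), setIntegral_const, measureReal_def, hμP l,
            integral_const_mul, smul_eq_mul]
          ring
  have hαsum : ∑ l, Real.exp (s l) / Sb = n := by
    rw [← Finset.sum_div, ← hS_def, hSb_def,
      div_div_eq_mul_div, mul_comm, mul_div_assoc, div_self hS_pos.ne', mul_one]
  have hsum_eq : ∑ l, ((Real.exp (s l) / Sb * (C_V * (Δ + r)) + Sb⁻¹ * (Real.exp M * ε) * C_V) * n⁻¹
      + (C_V * |Sb⁻¹ - W⁻¹|) * ∫ y in P l, Real.exp (t y) ∂μ)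
      = C_V * (Δ + r) + Sb⁻¹ * (Real.exp M * ε) * C_V + (C_V * |Sb⁻¹ - W⁻¹|) * W := by
    rw [Finset.sum_add_distrib, ← Finset.mul_sum, ← hW_sum, ← Finset.sum_mul,
      Finset.sum_add_distrib, ← Finset.sum_mul, hαsum, Finset.sum_const, Finset.card_univ,
      Fintype.card_fin, nsmul_eq_mul, ← hn_def, ← mul_add, mul_comm n, mul_assoc,
      mul_inv_cancel₀ hn.ne', mul_one]
  have hSb_sum : Sb = ∑ l, Real.exp (s l) * n⁻¹ := by
    rw [hSb_def, ← Finset.sum_mul, ← hS_def, div_eq_mul_inv]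
  have hIl_sum : ∀ l : Fin N, ∫ _y in P l, Real.exp (s l) ∂μ = Real.exp (s l) * n⁻¹ := by
    intro l; rw [setIntegral_const, measureReal_def, hμP l, smul_eq_mul]; ring
  have hWSb : |W - Sb| ≤ Real.exp M * ε := by
    rw [hW_sum, hSb_sum]
    simp_rw [← hIl_sum]
    rw [← Finset.sum_sub_distrib]
    have step : ∀ l ∈ Finset.univ, |(∫ y in P l, Real.exp (t y) ∂μ)
        - ∫ _y in P l, Real.exp (s l) ∂μ| ≤ Real.exp M * ε * n⁻¹ := by
      intro l _
      rw [← integral_sub hInt_expt.integrableOn ((integrable_const _).integrableOn)]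
      calc |∫ y in P l, (Real.exp (t y) - Real.exp (s l)) ∂μ|
          ≤ ∫ y in P l, |Real.exp (t y) - Real.exp (s l)| ∂μ := by
            simpa [Real.norm_eq_abs] using norm_integral_le_integral_norm
              (μ := μ.restrict (P l)) (fun y => Real.exp (t y) - Real.exp (s l))
        _ ≤ ∫ _y in P l, Real.exp M * ε ∂μ := by
            refine setIntegral_mono_on
              ((hInt_expt.integrableOn.sub ((integrable_const _).integrableOn)).abs)
              ((integrable_const _).integrableOn) (hPmeas l) fun y hy => ?_
            rw [abs_sub_comm]
            exact hexp_st l y hy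
        _ = Real.exp M * ε * n⁻¹ := by
            rw [setIntegral_const, measureReal_def, hμP l, smul_eq_mul]; ring
    calc |∑ l, ((∫ y in P l, Real.exp (t y) ∂μ) - ∫ _y in P l, Real.exp (s l) ∂μ)|
        ≤ ∑ l, |(∫ y in P l, Real.exp (t y) ∂μ) - ∫ _y in P l, Real.exp (s l) ∂μ| :=
          Finset.abs_sum_le_sum_abs _ _
      _ ≤ ∑ _l : Fin N, Real.exp M * ε * n⁻¹ := Finset.sum_le_sum step
      _ = Real.exp M * ε := by
          rw [Finset.sum_const, Finset.card_univ, Fintype.card_fin, nsmul_eq_mul, ← hn_def]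
          field_simp [hn.ne']
  have goal_eq : ‖S⁻¹ • (∑ k, Real.exp (s k) • V (Xv k)) - W⁻¹ • T‖
      ≤ (C_V + 4 * Real.exp (2 * M) * C_Q * C_K * C_V) * (Δ + r) := by
    rw [hdiff_eq]
    calc ‖∑ l, ∫ y in P l,
          ((Real.exp (s l) / Sb) • V (Xv l) - (W⁻¹ * Real.exp (t y)) • V (f y)) ∂μ‖
        ≤ ∑ l, ‖∫ y in P l,
          ((Real.exp (s l) / Sb) • V (Xv l) - (W⁻¹ * Real.exp (t y)) • V (f y)) ∂μ‖ :=
          norm_sum_le _ _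
      _ ≤ ∑ l, ((Real.exp (s l) / Sb * (C_V * (Δ + r)) + Sb⁻¹ * (Real.exp M * ε) * C_V) * n⁻¹
            + (C_V * |Sb⁻¹ - W⁻¹|) * ∫ y in P l, Real.exp (t y) ∂μ) :=
          Finset.sum_le_sum fun l _ => key l
      _ = C_V * (Δ + r) + Sb⁻¹ * (Real.exp M * ε) * C_V + (C_V * |Sb⁻¹ - W⁻¹|) * W := hsum_eq
      _ ≤ (C_V + 4 * Real.exp (2 * M) * C_Q * C_K * C_V) * (Δ + r) := by
          have hnn : (0:ℝ) ≤ Real.exp M * ε * C_V :=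
            mul_nonneg (mul_nonneg (Real.exp_pos M).le hε0) hCV.le
          have h1 : Sb⁻¹ * (Real.exp M * ε) * C_V ≤ Real.exp (2 * M) * ε * C_V := by
            rw [hexp2]
            have h := mul_le_mul_of_nonneg_right hSb_inv hnn
            calc Sb⁻¹ * (Real.exp M * ε) * C_V = Sb⁻¹ * (Real.exp M * ε * C_V) := by ring
              _ ≤ Real.exp M * (Real.exp M * ε * C_V) := h
              _ = Real.exp M * Real.exp M * ε * C_V := by ring
          have habsW : |Sb⁻¹ - W⁻¹| * W = |W - Sb| / Sb := by
            rw [show Sb⁻¹ - W⁻¹ = (W - Sb) / (Sb * W) by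
              rw [inv_eq_one_div, inv_eq_one_div,
                div_sub_div _ _ hSb_pos.ne' hW_pos.ne', one_mul, mul_one], abs_div,
              abs_of_pos (mul_pos hSb_pos hW_pos), div_mul_eq_mul_div, mul_comm Sb W,
              ← div_div, mul_div_assoc, div_self hW_pos.ne', mul_one]
          have hSbM : (Real.exp M)⁻¹ ≤ Sb := by rw [← Real.exp_neg]; exact hSb_lb
          have hone : 1 ≤ Real.exp M * Sb := by
            have hmm := mul_le_mul_of_nonneg_left hSbM (Real.exp_pos M).le
            rwa [mul_inv_cancel₀ (Real.exp_ne_zero M)] at hmm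
          have hd : |W - Sb| / Sb ≤ Real.exp M * ε * Real.exp M := by
            rw [div_le_iff₀ hSb_pos]
            calc |W - Sb| ≤ Real.exp M * ε := hWSb
              _ ≤ Real.exp M * ε * (Real.exp M * Sb) :=
                  le_mul_of_one_le_right (mul_nonneg (Real.exp_pos M).le hε0) hone
              _ = Real.exp M * ε * Real.exp M * Sb := by ring
          have h2 : C_V * |Sb⁻¹ - W⁻¹| * W ≤ Real.exp (2 * M) * ε * C_V := by
            rw [mul_assoc, habsW, hexp2]
            calc C_V * (|W - Sb| / Sb) ≤ C_V * (Real.exp M * ε * Real.exp M) :=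
                  mul_le_mul_of_nonneg_left hd hCV.le
              _ = Real.exp M * Real.exp M * ε * C_V := by ring
          have hεexp : Real.exp (2 * M) * ε * C_V + Real.exp (2 * M) * ε * C_V
              = 4 * Real.exp (2 * M) * C_Q * C_K * C_V * (Δ + r) := by
            rw [hε_def]; ring
          linarith [h1, h2]
  exact goal_eq

/-- deterministic form of Corollary 3.3: transferability of graph
transformers across graph sizes. For two samples of sizes `N₁` and `N₂` with partitions
of radii `r₁, r₂`, equal cell masses `1/N₁`, `1/N₂`, positional encodings with errors
`Δ₁, Δ₂`, and `M` bounding all attention inner products, the piecewise-constant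
interpolations `g₁, g₂` of the two graph-transformer outputs satisfy
`∫ ‖g₁ − g₂‖ dμ ≤ Δ_{Φ₁} + Δ_{Φ₂} + 2·exp(2M)·C_Q·C_K·C_V·(r₁ + r₂)`. -/
theorem graph_transformer_transferability
    {D : ℕ} {X : Type*} [MetricSpace X] [MeasurableSpace X] [BorelSpace X]
    (μ : Measure X) [IsProbabilityMeasure μ]
    (Q K V : EuclideanSpace ℝ (Fin D) →ₗ[ℝ] EuclideanSpace ℝ (Fin D))
    (C_Q C_K C_V Δ₁ Δ₂ r₁ r₂ : ℝ)
    (hCQ : 0 < C_Q) (hCK : 0 < C_K) (hCV : 0 < C_V)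
    (hΔ₁ : 0 ≤ Δ₁) (hΔ₂ : 0 ≤ Δ₂) (hr₁ : 0 < r₁) (hr₂ : 0 < r₂)
    (hQ : ∀ u, ‖Q u‖ ≤ C_Q * ‖u‖) (hK : ∀ u, ‖K u‖ ≤ C_K * ‖u‖)
    (hV : ∀ u, ‖V u‖ ≤ C_V * ‖u‖)
    (f : X → EuclideanSpace ℝ (Fin D))
    (hfLip : ∀ a b, ‖f a - f b‖ ≤ dist a b)
    (hf1 : ∀ a : X, ‖f a‖ ≤ 1)
    -- first sample
    (N₁ : ℕ) (x₁ : Fin N₁ → X) (P₁ : Fin N₁ → Set X)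
    (hP₁meas : ∀ j, MeasurableSet (P₁ j))
    (hP₁disj : Pairwise fun j k => Disjoint (P₁ j) (P₁ k))
    (hP₁cover : (⋃ j, P₁ j) = Set.univ)
    (hP₁ball : ∀ j, P₁ j ⊆ Metric.closedBall (x₁ j) r₁)
    (hP₁mass : ∀ j, μ (P₁ j) = (N₁ : ENNReal)⁻¹)
    (Xv₁ : Fin N₁ → EuclideanSpace ℝ (Fin D))
    (hXv₁ : ∀ j, ‖Xv₁ j - f (x₁ j)‖ ≤ Δ₁) (hXv₁1 : ∀ j, ‖Xv₁ j‖ ≤ 1)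
    -- second sample
    (N₂ : ℕ) (x₂ : Fin N₂ → X) (P₂ : Fin N₂ → Set X)
    (hP₂meas : ∀ j, MeasurableSet (P₂ j))
    (hP₂disj : Pairwise fun j k => Disjoint (P₂ j) (P₂ k))
    (hP₂cover : (⋃ j, P₂ j) = Set.univ)
    (hP₂ball : ∀ j, P₂ j ⊆ Metric.closedBall (x₂ j) r₂)
    (hP₂mass : ∀ j, μ (P₂ j) = (N₂ : ENNReal)⁻¹)
    (Xv₂ : Fin N₂ → EuclideanSpace ℝ (Fin D))
    (hXv₂ : ∀ j, ‖Xv₂ j - f (x₂ j)‖ ≤ Δ₂) (hXv₂1 : ∀ j, ‖Xv₂ j‖ ≤ 1)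
    -- attention bound
    (M : ℝ) (hM0 : 0 ≤ M)
    (hM₁ : ∀ i j, abs ⟪Q (Xv₁ i), K (Xv₁ j)⟫ ≤ M)
    (hM₂ : ∀ i j, abs ⟪Q (Xv₂ i), K (Xv₂ j)⟫ ≤ M)
    (hMf : ∀ u v : X, abs ⟪Q (f u), K (f v)⟫ ≤ M)
    -- piecewise-constant interpolations of the graph-transformer outputs
    (g₁ g₂ : X → EuclideanSpace ℝ (Fin D))
    (hg₁ : ∀ j : Fin N₁, ∀ y ∈ P₁ j,
      g₁ y = (∑ k, Real.exp ⟪Q (Xv₁ j), K (Xv₁ k)⟫)⁻¹ •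
              (∑ k, Real.exp ⟪Q (Xv₁ j), K (Xv₁ k)⟫ • V (Xv₁ k)))
    (hg₂ : ∀ j : Fin N₂, ∀ y ∈ P₂ j,
      g₂ y = (∑ k, Real.exp ⟪Q (Xv₂ j), K (Xv₂ k)⟫)⁻¹ •
              (∑ k, Real.exp ⟪Q (Xv₂ j), K (Xv₂ k)⟫ • V (Xv₂ k)))
    (ΔΦ₁ ΔΦ₂ : ℝ)
    (hΔΦ₁ : ΔΦ₁ = (C_V + 4 * Real.exp (2 * M) * C_Q * C_K * C_V) * Δ₁ +
        (Real.exp M * C_V + 2 * Real.exp (2 * M) * C_Q * C_K * C_V) * r₁)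
    (hΔΦ₂ : ΔΦ₂ = (C_V + 4 * Real.exp (2 * M) * C_Q * C_K * C_V) * Δ₂ +
        (Real.exp M * C_V + 2 * Real.exp (2 * M) * C_Q * C_K * C_V) * r₂) :
    (∫ y, ‖g₁ y - g₂ y‖ ∂μ)
      ≤ ΔΦ₁ + ΔΦ₂ + 2 * Real.exp (2 * M) * C_Q * C_K * C_V * (r₁ + r₂) := by
  classical
  set Φ : X → EuclideanSpace ℝ (Fin D) := fun y =>
    (∫ z, Real.exp ⟪Q (f y), K (f z)⟫ ∂μ)⁻¹ •
      (∫ z, Real.exp ⟪Q (f y), K (f z)⟫ • V (f z) ∂μ) with hΦ_def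
  set B₁ : ℝ := (C_V + 4 * Real.exp (2 * M) * C_Q * C_K * C_V) * (Δ₁ + r₁) with hB₁
  set B₂ : ℝ := (C_V + 4 * Real.exp (2 * M) * C_Q * C_K * C_V) * (Δ₂ + r₂) with hB₂
  have hmem₁ : ∀ y : X, ∃ j, y ∈ P₁ j := fun y => by
    have : y ∈ ⋃ j, P₁ j := hP₁cover ▸ Set.mem_univ y
    exact Set.mem_iUnion.1 this
  have hmem₂ : ∀ y : X, ∃ j, y ∈ P₂ j := fun y => by
    have : y ∈ ⋃ j, P₂ j := hP₂cover ▸ Set.mem_univ y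
    exact Set.mem_iUnion.1 this
  have hb₁ : ∀ y : X, ‖g₁ y - Φ y‖ ≤ B₁ := by
    intro y
    obtain ⟨j, hj⟩ := hmem₁ y
    rw [hg₁ j y hj]
    exact att_pointwise μ Q K V C_Q C_K C_V Δ₁ r₁ hCQ hCK hCV hΔ₁ hr₁ hQ hK hV f hfLip hf1
      N₁ x₁ P₁ hP₁meas hP₁disj hP₁cover hP₁ball hP₁mass Xv₁ hXv₁ hXv₁1 M hM0 hM₁ hMf y j hj
  have hb₂ : ∀ y : X, ‖g₂ y - Φ y‖ ≤ B₂ := by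
    intro y
    obtain ⟨j, hj⟩ := hmem₂ y
    rw [hg₂ j y hj]
    exact att_pointwise μ Q K V C_Q C_K C_V Δ₂ r₂ hCQ hCK hCV hΔ₂ hr₂ hQ hK hV f hfLip hf1
      N₂ x₂ P₂ hP₂meas hP₂disj hP₂cover hP₂ball hP₂mass Xv₂ hXv₂ hXv₂1 M hM0 hM₂ hMf y j hj
  have hpt : ∀ y : X, ‖g₁ y - g₂ y‖ ≤ B₁ + B₂ := by
    intro y
    calc ‖g₁ y - g₂ y‖ ≤ ‖g₁ y - Φ y‖ + ‖Φ y - g₂ y‖ := by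
          rw [← dist_eq_norm, ← dist_eq_norm, ← dist_eq_norm]
          exact dist_triangle _ _ _
      _ ≤ B₁ + B₂ := by
          have h2 : ‖Φ y - g₂ y‖ = ‖g₂ y - Φ y‖ := norm_sub_rev _ _
          linarith [hb₁ y, hb₂ y]
  -- measurability of g₁ and g₂
  have hgmeas : ∀ (N : ℕ) (P : Fin N → Set X) (g : X → EuclideanSpace ℝ (Fin D))
      (c : Fin N → EuclideanSpace ℝ (Fin D)),
      (∀ j, MeasurableSet (P j)) → (Pairwise fun j k => Disjoint (P j) (P k)) →
      ((⋃ j, P j) = Set.univ) → (∀ j, ∀ y ∈ P j, g y = c j) → Measurable g := by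
    intro N P g c hmeas hdisj hcover hgc
    have hrep : g = fun y => ∑ j, (P j).indicator (fun _ => c j) y := by
      funext y
      have : y ∈ ⋃ j, P j := hcover ▸ Set.mem_univ y
      obtain ⟨j₀, hj₀⟩ := Set.mem_iUnion.1 this
      rw [Finset.sum_eq_single j₀]
      · rw [Set.indicator_of_mem hj₀, hgc j₀ y hj₀]
      · intro k _ hk
        refine Set.indicator_of_notMem (fun hyk => ?_) _
        exact (hdisj hk).ne_of_mem hyk hj₀ rfl
      · intro h; exact absurd (Finset.mem_univ j₀) h
    rw [hrep]
    exact Finset.measurable_sum _ fun j _ =>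
      Measurable.indicator measurable_const (hmeas j)
  have hg₁meas : Measurable g₁ :=
    hgmeas N₁ P₁ g₁ _ hP₁meas hP₁disj hP₁cover hg₁
  have hg₂meas : Measurable g₂ :=
    hgmeas N₂ P₂ g₂ _ hP₂meas hP₂disj hP₂cover hg₂
  have hint : Integrable (fun y => ‖g₁ y - g₂ y‖) μ := by
    refine (integrable_const (B₁ + B₂)).mono'
      ((hg₁meas.sub hg₂meas).norm).aestronglyMeasurable (ae_of_all _ fun y => ?_)
    rw [Real.norm_eq_abs, abs_of_nonneg (norm_nonneg _)]
    exact hpt y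
  have hle : (∫ y, ‖g₁ y - g₂ y‖ ∂μ) ≤ B₁ + B₂ := by
    calc (∫ y, ‖g₁ y - g₂ y‖ ∂μ) ≤ ∫ _y, (B₁ + B₂) ∂μ :=
          integral_mono hint (integrable_const _) hpt
      _ = B₁ + B₂ := by simp [measure_univ]
  refine hle.trans ?_
  rw [hB₁, hB₂, hΔΦ₁, hΔΦ₂]
  have e0 : 1 ≤ Real.exp M := Real.one_le_exp hM0
  have e1 : 0 ≤ (Real.exp M - 1) * C_V * r₁ :=
    mul_nonneg (mul_nonneg (sub_nonneg.2 e0) hCV.le) hr₁.le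
  have e2 : 0 ≤ (Real.exp M - 1) * C_V * r₂ :=
    mul_nonneg (mul_nonneg (sub_nonneg.2 e0) hCV.le) hr₂.le
  nlinarith [e1, e2]
end

section
/- (Deterministic form of the paper's Corollary 3.4, convergence of the sparse graph transformer to a restricted manifold transformer.) Let μ be a Borel probability measure on X, let x_1, …, x_N ∈ X, and let V_1, …, V_N be pairwise disjoint Borel sets whose union is X, with V_j contained in the closed ball of radius r > 0 centered at x_j and μ(V_j) = 1/N for every j. Assume ‖f(x)‖ ≤ 1 for all x ∈ X, let X_1, …, X_N ∈ ℝ^D satisfy ‖X_j − f(x_j)‖ ≤ Δ and ‖X_j‖ ≤ 1 for all j, and let M ≥ 0 satisfy |⟨Q X_i, K X_j⟩| ≤ M for all i, j and |⟨Q f(u), K f(v)⟩| ≤ M for all u, v ∈ X. Fix an index i and a nonempty subset S ⊆ {1, …, N}, and set A = ⋃_{j ∈ S} V_j. Define the sparse attention output Φ̇_G(i) = (Σ_{j ∈ S} exp(⟨Q X_i, K X_j⟩) V X_j) / (Σ_{j ∈ S} exp(⟨Q X_i, K X_j⟩)) and the restricted manifold-transformer output Φ̇_M(x_i) = (∫_A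 exp(⟨Q f(x_i), K f(y)⟩) V f(y) dμ(y)) / (∫_A exp(⟨Q f(x_i), K f(y)⟩) dμ(y)). Then ‖Φ̇_G(i) − Φ̇_M(x_i)‖ ≤ (C_V + 4·exp(2M)·C_Q·C_K·C_V)·Δ + (exp(M)·C_V + 2·exp(2M)·C_Q·C_K·C_V)·r. -/
open MeasureTheory
open scoped RealInnerProductSpace BigOperators

lemma exp_lip_aux' {s t M : ℝ} (hst : s ≤ t) (ht : t ≤ M) :
    Real.exp t - Real.exp s ≤ Real.exp M * (t - s) := by
  have h1 : s - t + 1 ≤ Real.exp (s - t) := Real.add_one_le_exp _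
  have h2 : Real.exp t - Real.exp s = Real.exp t * (1 - Real.exp (s - t)) := by
    rw [mul_sub, mul_one, ← Real.exp_add]; ring_nf
  have h3 : Real.exp t ≤ Real.exp M := Real.exp_le_exp.2 ht
  nlinarith [Real.exp_pos t, Real.exp_pos (s - t)]

lemma exp_lip' {s t M : ℝ} (hs : |s| ≤ M) (ht : |t| ≤ M) :
    |Real.exp s - Real.exp t| ≤ Real.exp M * |s - t| := by
  rcases le_total s t with h | h
  · rw [abs_sub_comm, abs_of_nonneg (sub_nonneg.2 (Real.exp_le_exp.2 h)),
      abs_sub_comm, abs_of_nonneg (sub_nonneg.2 h)]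
    exact exp_lip_aux' h (le_of_abs_le ht)
  · rw [abs_of_nonneg (sub_nonneg.2 (Real.exp_le_exp.2 h)),
      abs_of_nonneg (sub_nonneg.2 h)]
    exact exp_lip_aux' h (le_of_abs_le hs)

lemma helper1' {p q u v : ℝ} (hu : u ≠ 0) (hv : v ≠ 0) :
    p / u - q / v = (p - q) / u + q * ((v - u) / (u * v)) := by
  field_simp; ring

lemma helper2' {b x u : ℝ} (hb : b ≠ 0) (hu : u ≠ 0) : b * (x / (u * b)) = x / u := by
  field_simp

set_option maxHeartbeats 2000000 in
/-- deterministic form of Corollary 3.4: convergence of the sparse graph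
transformer to a restricted manifold transformer. For a nonempty index subset
`S ⊆ {1, …, N}` with `A = ⋃_{j ∈ S} P j`, the sparse attention output and the restricted
manifold-transformer output satisfy
`‖Φ̇_G(i) − Φ̇_M(x i)‖ ≤ (C_V + 4·exp(2M)·C_Q·C_K·C_V)·Δ
                         + (exp(M)·C_V + 2·exp(2M)·C_Q·C_K·C_V)·r`. -/
theorem sparse_graph_transformer_to_restricted_manifold_transformer_bound
    {D : ℕ} {X : Type*} [MetricSpace X] [MeasurableSpace X] [BorelSpace X]
    (μ : Measure X) [IsProbabilityMeasure μ]
    (Q K V : EuclideanSpace ℝ (Fin D) →ₗ[ℝ] EuclideanSpace ℝ (Fin D))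
    (C_Q C_K C_V Δ r : ℝ)
    (hCQ : 0 < C_Q) (hCK : 0 < C_K) (hCV : 0 < C_V) (hΔ : 0 ≤ Δ) (hr : 0 < r)
    (hQ : ∀ u, ‖Q u‖ ≤ C_Q * ‖u‖) (hK : ∀ u, ‖K u‖ ≤ C_K * ‖u‖)
    (hV : ∀ u, ‖V u‖ ≤ C_V * ‖u‖)
    (f : X → EuclideanSpace ℝ (Fin D))
    (hfLip : ∀ a b, ‖f a - f b‖ ≤ dist a b)
    (hf1 : ∀ a : X, ‖f a‖ ≤ 1)
    (N : ℕ) (x : Fin N → X) (P : Fin N → Set X)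
    (hPmeas : ∀ j, MeasurableSet (P j))
    (hPdisj : Pairwise fun j k => Disjoint (P j) (P k))
    (hPcover : (⋃ j, P j) = Set.univ)
    (hPball : ∀ j, P j ⊆ Metric.closedBall (x j) r)
    (hPmass : ∀ j, μ (P j) = (N : ENNReal)⁻¹)
    (Xv : Fin N → EuclideanSpace ℝ (Fin D))
    (hXv : ∀ j, ‖Xv j - f (x j)‖ ≤ Δ) (hXv1 : ∀ j, ‖Xv j‖ ≤ 1)
    (M : ℝ) (hM0 : 0 ≤ M)
    (hM1 : ∀ i j, abs ⟪Q (Xv i), K (Xv j)⟫ ≤ M)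
    (hM2 : ∀ u v : X, abs ⟪Q (f u), K (f v)⟫ ≤ M)
    (i : Fin N) (S : Finset (Fin N)) (hS : S.Nonempty)
    (A : Set X) (hA : A = ⋃ j ∈ S, P j) :
    ‖(∑ j ∈ S, Real.exp ⟪Q (Xv i), K (Xv j)⟫)⁻¹ •
        (∑ j ∈ S, Real.exp ⟪Q (Xv i), K (Xv j)⟫ • V (Xv j)) -
      (∫ y in A, Real.exp ⟪Q (f (x i)), K (f y)⟫ ∂μ)⁻¹ •
        (∫ y in A, Real.exp ⟪Q (f (x i)), K (f y)⟫ • V (f y) ∂μ)‖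
      ≤ (C_V + 4 * Real.exp (2 * M) * C_Q * C_K * C_V) * Δ +
        (Real.exp M * C_V + 2 * Real.exp (2 * M) * C_Q * C_K * C_V) * r := by
  have hN : 0 < N := i.pos
  have hNR : (0:ℝ) < (N:ℝ) := by exact_mod_cast hN
  set a : Fin N → ℝ := fun j => Real.exp ⟪Q (Xv i), K (Xv j)⟫ with ha_def
  set g : X → ℝ := fun y => Real.exp ⟪Q (f (x i)), K (f y)⟫ with hg_def
  set b : Fin N → EuclideanSpace ℝ (Fin D) := fun j => V (Xv j) with hb_def
  set h : X → EuclideanSpace ℝ (Fin D) := fun y => V (f y) with hh_def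
  -- continuity
  have hfc : Continuous f := by
    have : LipschitzWith 1 f := LipschitzWith.of_dist_le_mul (fun a b => by
      rw [dist_eq_norm]; simpa using hfLip a b)
    exact this.continuous
  have hKc : Continuous K := K.continuous_of_finiteDimensional
  have hVc : Continuous V := V.continuous_of_finiteDimensional
  have hgc : Continuous g := by
    exact Real.continuous_exp.comp (Continuous.inner continuous_const (hKc.comp hfc))
  have hhc : Continuous h := hVc.comp hfc
  -- pointwise bounds
  have hgpos : ∀ y, 0 < g y := fun y => Real.exp_pos _
  have hgle : ∀ y, g y ≤ Real.exp M := fun y =>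
    Real.exp_le_exp.2 (le_of_abs_le (hM2 (x i) y))
  have hgge : ∀ y, Real.exp (-M) ≤ g y := fun y =>
    Real.exp_le_exp.2 (neg_le_of_abs_le (hM2 (x i) y))
  have hhle : ∀ y, ‖h y‖ ≤ C_V := fun y => by
    calc ‖h y‖ ≤ C_V * ‖f y‖ := hV _
    _ ≤ C_V * 1 := by nlinarith [hf1 y]
    _ = C_V := mul_one _
  have hble : ∀ j, ‖b j‖ ≤ C_V := fun j => by
    calc ‖b j‖ ≤ C_V * ‖Xv j‖ := hV _
    _ ≤ C_V * 1 := by nlinarith [hXv1 j]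
    _ = C_V := mul_one _
  have hage : ∀ j, Real.exp (-M) ≤ a j := fun j =>
    Real.exp_le_exp.2 (neg_le_of_abs_le (hM1 i j))
  -- integrability
  have hint_g : Integrable g μ := by
    refine (integrable_const (Real.exp M)).mono' hgc.aestronglyMeasurable ?_
    filter_upwards with y
    rw [Real.norm_eq_abs, abs_of_pos (hgpos y)]; exact hgle y
  have hint_gh : Integrable (fun y => g y • h y) μ := by
    refine (integrable_const (Real.exp M * C_V)).mono'
      (hgc.smul hhc).aestronglyMeasurable ?_
    filter_upwards with y
    rw [norm_smul, Real.norm_eq_abs, abs_of_pos (hgpos y)]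
    exact mul_le_mul (hgle y) (hhle y) (norm_nonneg _) (Real.exp_pos M).le
  -- per-cell quantities
  set gI : Fin N → ℝ := fun j => ∫ y in P j, g y ∂μ with hgI_def
  set wI : Fin N → EuclideanSpace ℝ (Fin D) := fun j => ∫ y in P j, g y • h y ∂μ with hwI_def
  have hμP : ∀ j, μ.real (P j) = (N:ℝ)⁻¹ := by
    intro j; rw [measureReal_def, hPmass]; simp
  -- split integrals over A
  have hβeq : (∫ y in A, g y ∂μ) = ∑ j ∈ S, gI j := by
    rw [hA]
    exact integral_biUnion_finset S (fun j _ => hPmeas j)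
      ((hPdisj.set_pairwise _)) (fun j _ => hint_g.integrableOn)
  have hweq : (∫ y in A, g y • h y ∂μ) = ∑ j ∈ S, wI j := by
    rw [hA]
    exact integral_biUnion_finset S (fun j _ => hPmeas j)
      ((hPdisj.set_pairwise _)) (fun j _ => hint_gh.integrableOn)
  set α : ℝ := ∑ j ∈ S, a j with hα_def
  set β : ℝ := ∑ j ∈ S, gI j with hβ_def
  -- bounds on gI
  have hgI_lb : ∀ j, Real.exp (-M) * (N:ℝ)⁻¹ ≤ gI j := by
    intro j
    have := setIntegral_mono_on (integrable_const (Real.exp (-M))).integrableOn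
      hint_g.integrableOn (hPmeas j) (fun y _ => hgge y)
    rw [setIntegral_const, smul_eq_mul, hμP j] at this
    linarith
  have hNinv0 : (0:ℝ) < (N:ℝ)⁻¹ := inv_pos.2 hNR
  have hgI_pos : ∀ j, 0 < gI j := fun j =>
    lt_of_lt_of_le (mul_pos (Real.exp_pos _) hNinv0) (hgI_lb j)
  -- key pointwise estimate on cells
  have key1 : ∀ j, ∀ y ∈ P j, |a j - g y| ≤ Real.exp M * (C_Q * C_K * (2*Δ + r)) := by
    intro j y hy
    have hdist : dist y (x j) ≤ r := Metric.mem_closedBall.1 (hPball j hy)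
    have hXvfy : ‖Xv j - f y‖ ≤ Δ + r := by
      have hre : Xv j - f y = (Xv j - f (x j)) + (f (x j) - f y) := by abel
      calc ‖Xv j - f y‖ = ‖(Xv j - f (x j)) + (f (x j) - f y)‖ := by rw [hre]
      _ ≤ ‖Xv j - f (x j)‖ + ‖f (x j) - f y‖ := norm_add_le _ _
      _ ≤ Δ + r := by
          have := hfLip (x j) y
          rw [dist_comm] at hdist
          linarith [hXv j]
    have hinner : |⟪Q (Xv i), K (Xv j)⟫ - ⟪Q (f (x i)), K (f y)⟫| ≤
        C_Q * C_K * (2*Δ + r) := by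
      have hsplit : ⟪Q (Xv i), K (Xv j)⟫ - ⟪Q (f (x i)), K (f y)⟫
          = ⟪Q (Xv i - f (x i)), K (Xv j)⟫ + ⟪Q (f (x i)), K (Xv j - f y)⟫ := by
        simp only [map_sub, inner_sub_left, inner_sub_right]; ring
      rw [hsplit]
      have h1 : |⟪Q (Xv i - f (x i)), K (Xv j)⟫| ≤ (C_Q * Δ) * (C_K * 1) := by
        refine le_trans (abs_real_inner_le_norm _ _) ?_
        have e1 : ‖Q (Xv i - f (x i))‖ ≤ C_Q * Δ :=
          le_trans (hQ _) (by nlinarith [hXv i, norm_nonneg (Xv i - f (x i))])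
        have e2 : ‖K (Xv j)‖ ≤ C_K * 1 :=
          le_trans (hK _) (by nlinarith [hXv1 j, norm_nonneg (Xv j)])
        exact mul_le_mul e1 e2 (norm_nonneg _) (by positivity)
      have h2 : |⟪Q (f (x i)), K (Xv j - f y)⟫| ≤ (C_Q * 1) * (C_K * (Δ + r)) := by
        refine le_trans (abs_real_inner_le_norm _ _) ?_
        have e1 : ‖Q (f (x i))‖ ≤ C_Q * 1 :=
          le_trans (hQ _) (by nlinarith [hf1 (x i), norm_nonneg (f (x i))])
        have e2 : ‖K (Xv j - f y)‖ ≤ C_K * (Δ + r) :=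
          le_trans (hK _) (by nlinarith [norm_nonneg (Xv j - f y)])
        exact mul_le_mul e1 e2 (norm_nonneg _) (by positivity)
      calc |⟪Q (Xv i - f (x i)), K (Xv j)⟫ + ⟪Q (f (x i)), K (Xv j - f y)⟫|
          ≤ |⟪Q (Xv i - f (x i)), K (Xv j)⟫| + |⟪Q (f (x i)), K (Xv j - f y)⟫| := abs_add_le _ _
        _ ≤ (C_Q * Δ) * (C_K * 1) + (C_Q * 1) * (C_K * (Δ + r)) := add_le_add h1 h2
        _ = C_Q * C_K * (2*Δ + r) := by ring
    calc |a j - g y| ≤ Real.exp M * |⟪Q (Xv i), K (Xv j)⟫ - ⟪Q (f (x i)), K (f y)⟫| :=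
        exp_lip' (hM1 i j) (hM2 (x i) y)
      _ ≤ Real.exp M * (C_Q * C_K * (2*Δ + r)) := by
          have := Real.exp_pos M; nlinarith [hinner]
    done

  -- upper bound on distance Xv j to f y on cell
  have hXvfy : ∀ j, ∀ y ∈ P j, ‖Xv j - f y‖ ≤ Δ + r := by
    intro j y hy
    have hdist : dist (x j) y ≤ r := by
      rw [dist_comm]; exact Metric.mem_closedBall.1 (hPball j hy)
    have hre : Xv j - f y = (Xv j - f (x j)) + (f (x j) - f y) := by abel
    calc ‖Xv j - f y‖ = ‖(Xv j - f (x j)) + (f (x j) - f y)‖ := by rw [hre]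
    _ ≤ ‖Xv j - f (x j)‖ + ‖f (x j) - f y‖ := norm_add_le _ _
    _ ≤ Δ + r := by linarith [hXv j, hfLip (x j) y]
  set e1 : ℝ := Real.exp M * (C_Q * C_K * (2*Δ + r)) with he1_def
  have he1nn : 0 ≤ e1 := by positivity
  have key1' : ∀ j, |a j * (N:ℝ)⁻¹ - gI j| ≤ e1 * (N:ℝ)⁻¹ := by
    intro j
    have heq : a j * (N:ℝ)⁻¹ - gI j = ∫ y in P j, (a j - g y) ∂μ := by
      rw [integral_sub (integrable_const _) hint_g.integrableOn,
        setIntegral_const, smul_eq_mul, hμP j, mul_comm]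
    rw [heq, ← Real.norm_eq_abs]
    have := norm_setIntegral_le_of_norm_le_const (μ := μ) (s := P j)
      (C := e1) (by rw [hPmass]; exact ENNReal.inv_lt_top.2 (by exact_mod_cast hN))
      (fun y hy => by rw [Real.norm_eq_abs]; exact key1 j y hy)
    rwa [hμP j] at this
  have key2' : ∀ j, ‖gI j • b j - wI j‖ ≤ (C_V * (Δ + r)) * gI j := by
    intro j
    have hbh : ∀ y ∈ P j, ‖b j - h y‖ ≤ C_V * (Δ + r) := by
      intro y hy
      have : b j - h y = V (Xv j - f y) := by rw [map_sub]
      rw [this]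
      calc ‖V (Xv j - f y)‖ ≤ C_V * ‖Xv j - f y‖ := hV _
      _ ≤ C_V * (Δ + r) := by nlinarith [hXvfy j y hy, norm_nonneg (Xv j - f y)]
    have hint1 : IntegrableOn (fun y => g y • (b j - h y)) (P j) μ := by
      have : (fun y => g y • (b j - h y)) = fun y => (g y • b j - g y • h y) := by
        funext y; rw [smul_sub]
      rw [this]
      exact ((hint_g.smul_const (b j)).sub hint_gh).integrableOn
    have heq : gI j • b j - wI j = ∫ y in P j, (g y • (b j - h y)) ∂μ := by
      have hfun : (fun y => g y • (b j - h y)) = fun y => (g y • b j - g y • h y) := by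
        funext y; rw [smul_sub]
      rw [hfun, integral_sub (hint_g.integrableOn.smul_const (b j)) hint_gh.integrableOn,
        integral_smul_const]
    rw [heq]
    calc ‖∫ y in P j, g y • (b j - h y) ∂μ‖ ≤ ∫ y in P j, ‖g y • (b j - h y)‖ ∂μ :=
        norm_integral_le_integral_norm _
    _ ≤ ∫ y in P j, (C_V * (Δ + r)) * g y ∂μ := by
        refine setIntegral_mono_on hint1.norm (hint_g.const_mul _).integrableOn
          (hPmeas j) (fun y hy => ?_)
        rw [norm_smul, Real.norm_eq_abs, abs_of_pos (hgpos y)]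
        rw [mul_comm]
        exact mul_le_mul_of_nonneg_right (hbh y hy) (hgpos y).le
    _ = (C_V * (Δ + r)) * gI j := by rw [integral_const_mul]
  -- positivity of sums
  have hcard : 0 < (S.card:ℝ) := by
    exact_mod_cast Finset.card_pos.2 hS
  have hαlb : (S.card:ℝ) * Real.exp (-M) ≤ α := by
    have := Finset.card_nsmul_le_sum S a (Real.exp (-M)) (fun j _ => hage j)
    rwa [nsmul_eq_mul] at this
  have hαpos : 0 < α := lt_of_lt_of_le (by positivity) hαlb
  have hβlb : (S.card:ℝ) * (Real.exp (-M) * (N:ℝ)⁻¹) ≤ β := by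
    have := Finset.card_nsmul_le_sum S gI (Real.exp (-M) * (N:ℝ)⁻¹) (fun j _ => hgI_lb j)
    rwa [nsmul_eq_mul] at this
  have hβpos : 0 < β := lt_of_lt_of_le (mul_pos hcard (mul_pos (Real.exp_pos _) hNinv0)) hβlb
  have hα0 : α ≠ 0 := ne_of_gt hαpos
  have hβ0 : β ≠ 0 := ne_of_gt hβpos
  -- rewrite goal
  rw [hβeq, hweq]
  -- decomposition
  have decomp : α⁻¹ • (∑ j ∈ S, a j • b j) - β⁻¹ • (∑ j ∈ S, wI j)
      = (∑ j ∈ S, ((a j / α - gI j / β) • b j))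
        + β⁻¹ • (∑ j ∈ S, (gI j • b j - wI j)) := by
    rw [Finset.smul_sum, Finset.smul_sum, Finset.smul_sum, ← Finset.sum_sub_distrib,
      ← Finset.sum_add_distrib]
    refine Finset.sum_congr rfl fun j _ => ?_
    match_scalars <;> ring
  rw [decomp]
  -- second part bound
  have part2 : ‖β⁻¹ • (∑ j ∈ S, (gI j • b j - wI j))‖ ≤ C_V * (Δ + r) := by
    rw [norm_smul, Real.norm_eq_abs, abs_of_pos (inv_pos.2 hβpos)]
    calc β⁻¹ * ‖∑ j ∈ S, (gI j • b j - wI j)‖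
        ≤ β⁻¹ * ∑ j ∈ S, ((C_V * (Δ + r)) * gI j) := by
          refine mul_le_mul_of_nonneg_left ?_ (inv_pos.2 hβpos).le
          exact le_trans (norm_sum_le _ _) (Finset.sum_le_sum fun j _ => key2' j)
    _ = β⁻¹ * ((C_V * (Δ + r)) * β) := by rw [← Finset.mul_sum, hβ_def]
    _ = C_V * (Δ + r) := by
        rw [mul_comm (C_V * (Δ + r)) β, ← mul_assoc, inv_mul_cancel₀ hβ0, one_mul]
  -- first part bound
  set α' : ℝ := α * (N:ℝ)⁻¹ with hα'_def
  have hα'pos : 0 < α' := mul_pos hαpos hNinv0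
  have hα'lb : (S.card:ℝ) * (Real.exp (-M) * (N:ℝ)⁻¹) ≤ α' := by
    rw [hα'_def]
    calc (S.card:ℝ) * (Real.exp (-M) * (N:ℝ)⁻¹)
        = ((S.card:ℝ) * Real.exp (-M)) * (N:ℝ)⁻¹ := by ring
    _ ≤ α * (N:ℝ)⁻¹ := by
        exact mul_le_mul_of_nonneg_right hαlb (by positivity)
  have hβα' : |β - α'| ≤ (S.card:ℝ) * (e1 * (N:ℝ)⁻¹) := by
    have hα'sum : α' = ∑ j ∈ S, a j * (N:ℝ)⁻¹ := by
      rw [hα'_def, hα_def, Finset.sum_mul]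
    have : β - α' = ∑ j ∈ S, (gI j - a j * (N:ℝ)⁻¹) := by
      rw [hβ_def, hα'sum, Finset.sum_sub_distrib]
    rw [this]
    calc |∑ j ∈ S, (gI j - a j * (N:ℝ)⁻¹)| ≤ ∑ j ∈ S, |gI j - a j * (N:ℝ)⁻¹| :=
        Finset.abs_sum_le_sum_abs _ _
    _ ≤ (S.card:ℝ) * (e1 * (N:ℝ)⁻¹) := by
        have := Finset.sum_le_card_nsmul S (fun j => |gI j - a j * (N:ℝ)⁻¹|)
          (e1 * (N:ℝ)⁻¹) (fun j _ => by simpa [abs_sub_comm] using key1' j)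
        rwa [nsmul_eq_mul] at this
  have hT1 : ∑ j ∈ S, |a j * (N:ℝ)⁻¹ - gI j| ≤ (S.card:ℝ) * (e1 * (N:ℝ)⁻¹) := by
    have := Finset.sum_le_card_nsmul S (fun j => |a j * (N:ℝ)⁻¹ - gI j|)
      (e1 * (N:ℝ)⁻¹) (fun j _ => key1' j)
    rwa [nsmul_eq_mul] at this
  have per_j : ∀ j ∈ S, |a j / α - gI j / β|
      ≤ |a j * (N:ℝ)⁻¹ - gI j| / α' + gI j * (|β - α'| / (α' * β)) := by
    intro j _
    have hα'0 : α' ≠ 0 := ne_of_gt hα'pos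
    have hrw : a j / α - gI j / β
        = (a j * (N:ℝ)⁻¹ - gI j) / α' + gI j * ((β - α') / (α' * β)) := by
      have e : a j / α = (a j * (N:ℝ)⁻¹) / α' := by
        rw [hα'_def, mul_div_mul_right _ _ (ne_of_gt hNinv0)]
      rw [e, helper1' hα'0 hβ0]
    rw [hrw]
    calc |(a j * (N:ℝ)⁻¹ - gI j) / α' + gI j * ((β - α') / (α' * β))|
        ≤ |(a j * (N:ℝ)⁻¹ - gI j) / α'| + |gI j * ((β - α') / (α' * β))| := abs_add_le _ _
    _ = |a j * (N:ℝ)⁻¹ - gI j| / α' + gI j * (|β - α'| / (α' * β)) := by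
        rw [abs_div, abs_of_pos hα'pos, abs_mul, abs_of_pos (hgI_pos j), abs_div,
          abs_of_pos (mul_pos hα'pos hβpos)]
  have sum1 : ∑ j ∈ S, |a j / α - gI j / β| ≤ 2 * e1 * Real.exp M := by
    have step1 : ∑ j ∈ S, |a j / α - gI j / β|
        ≤ (∑ j ∈ S, |a j * (N:ℝ)⁻¹ - gI j|) / α' + β * (|β - α'| / (α' * β)) := by
      calc ∑ j ∈ S, |a j / α - gI j / β|
          ≤ ∑ j ∈ S, (|a j * (N:ℝ)⁻¹ - gI j| / α' + gI j * (|β - α'| / (α' * β))) :=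
            Finset.sum_le_sum per_j
      _ = (∑ j ∈ S, |a j * (N:ℝ)⁻¹ - gI j|) / α' + β * (|β - α'| / (α' * β)) := by
          rw [Finset.sum_add_distrib, ← Finset.sum_div, ← Finset.sum_mul, hβ_def]
    have step2 : β * (|β - α'| / (α' * β)) = |β - α'| / α' :=
      helper2' hβ0 (ne_of_gt hα'pos)
    rw [step2] at step1
    have step3 : (∑ j ∈ S, |a j * (N:ℝ)⁻¹ - gI j|) / α' + |β - α'| / α'
        ≤ (2 * ((S.card:ℝ) * (e1 * (N:ℝ)⁻¹))) / α' := by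
      rw [← add_div, div_le_div_iff₀ hα'pos hα'pos]
      have : (∑ j ∈ S, |a j * (N:ℝ)⁻¹ - gI j|) + |β - α'|
          ≤ 2 * ((S.card:ℝ) * (e1 * (N:ℝ)⁻¹)) := by linarith
      nlinarith [hα'pos, Finset.sum_nonneg (fun j (_ : j ∈ S) => abs_nonneg (a j * (N:ℝ)⁻¹ - gI j)), abs_nonneg (β - α')]
    have hexp1 : Real.exp M * Real.exp (-M) = 1 := by
      rw [← Real.exp_add]; simp
    have step4 : (2 * ((S.card:ℝ) * (e1 * (N:ℝ)⁻¹))) / α' ≤ 2 * e1 * Real.exp M := by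
      rw [div_le_iff₀ hα'pos]
      have h5 : (S.card:ℝ) * (Real.exp (-M) * (N:ℝ)⁻¹) ≤ α' := hα'lb
      have hNinv : (0:ℝ) < (N:ℝ)⁻¹ := hNinv0
      have h6 : 2 * e1 * Real.exp M * ((S.card:ℝ) * (Real.exp (-M) * (N:ℝ)⁻¹))
          = 2 * ((S.card:ℝ) * (e1 * (N:ℝ)⁻¹)) := by
        rw [show (2:ℝ) * e1 * Real.exp M * ((S.card:ℝ) * (Real.exp (-M) * (N:ℝ)⁻¹))
            = 2 * ((S.card:ℝ) * (e1 * (N:ℝ)⁻¹)) * (Real.exp M * Real.exp (-M)) from by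
          ring, hexp1, mul_one]
      have h7 : 0 ≤ 2 * e1 * Real.exp M := by positivity
      linarith [mul_le_mul_of_nonneg_left h5 h7, h6]
    linarith
  have part1 : ‖∑ j ∈ S, ((a j / α - gI j / β) • b j)‖ ≤ (2 * e1 * Real.exp M) * C_V := by
    calc ‖∑ j ∈ S, ((a j / α - gI j / β) • b j)‖
        ≤ ∑ j ∈ S, |a j / α - gI j / β| * C_V := by
          refine le_trans (norm_sum_le _ _) (Finset.sum_le_sum fun j _ => ?_)
          rw [norm_smul, Real.norm_eq_abs]
          exact mul_le_mul_of_nonneg_left (hble j) (abs_nonneg _)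
    _ = (∑ j ∈ S, |a j / α - gI j / β|) * C_V := by rw [Finset.sum_mul]
    _ ≤ (2 * e1 * Real.exp M) * C_V :=
        mul_le_mul_of_nonneg_right sum1 hCV.le
  -- combine
  have hexp2 : Real.exp (2 * M) = Real.exp M * Real.exp M := by
    rw [← Real.exp_add]; ring_nf
  have hone : 1 ≤ Real.exp M := Real.one_le_exp hM0
  calc ‖(∑ j ∈ S, ((a j / α - gI j / β) • b j))
      + β⁻¹ • (∑ j ∈ S, (gI j • b j - wI j))‖
      ≤ ‖∑ j ∈ S, ((a j / α - gI j / β) • b j)‖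
        + ‖β⁻¹ • (∑ j ∈ S, (gI j • b j - wI j))‖ := norm_add_le _ _
  _ ≤ (2 * e1 * Real.exp M) * C_V + C_V * (Δ + r) := add_le_add part1 part2
  _ ≤ (C_V + 4 * Real.exp (2 * M) * C_Q * C_K * C_V) * Δ +
      (Real.exp M * C_V + 2 * Real.exp (2 * M) * C_Q * C_K * C_V) * r := by
    rw [he1_def, hexp2]
    nlinarith [Real.exp_pos M, mul_pos hCQ hCK, mul_pos (mul_pos hCQ hCK) hCV,
      mul_nonneg (mul_pos (mul_pos hCQ hCK) hCV).le hΔ,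
      mul_nonneg (mul_pos (mul_pos hCQ hCK) hCV).le hr.le]
end
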